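/- Lifted damped min-marginal subtraction preserves the lifted energy: let X ⊆ {0,1}^n be finite, λ^1, λ^0 ∈ ℝ^n, and i ∈ [n] such that both {x ∈ X : x_i = 0} and {x ∈ X : x_i = 1} are nonempty. Let m^β = min_{x∈X, x_i=β} (⟨λ^1, x⟩ + ⟨λ^0, 1−x⟩) for β ∈ {0,1}, ω ∈ [0,1], and M = ω·(m^1 − m^0). Define λ'^1 = λ^1 − max(M, 0)·e_i and λ'^0 = λ^0 − max(−M, 0)·e_i. Then E_X(λ'^1, λ'^0) = E_X(λ^1, λ^0). -/

import Mathlib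

open Finset





/-- The lifted energy `E_X(λ¹, λ⁰) = min_{x∈X} (⟨λ¹,x⟩ + ⟨λ⁰,1−x⟩)`. -/
noncomputable def liftedEnergy {n : ℕ} (X : Finset (Fin n → ℝ)) (hX : X.Nonempty)
    (lam1 lam0 : Fin n → ℝ) : ℝ :=
  X.inf' hX (fun x => ∑ k, (lam1 k * x k + lam0 k * (1 - x k)))

/-- The lifted min-marginal `m^β = min_{x∈X, x_i=β} (⟨λ¹,x⟩ + ⟨λ⁰,1−x⟩)`. -/
noncomputable def liftedMinMarginal {n : ℕ} (X : Finset (Fin n → ℝ)) (i : Fin n) (β : ℝ)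
    (h : (X.filter fun x => x i = β).Nonempty) (lam1 lam0 : Fin n → ℝ) : ℝ :=
  (X.filter fun x => x i = β).inf' h (fun x => ∑ k, (lam1 k * x k + lam0 k * (1 - x k)))

/-- Lifted damped min-marginal subtraction preserves the lifted energy:
with `M = ω (m¹ − m⁰)`, `λ'¹ = λ¹ − max(M,0) e_i` and `λ'⁰ = λ⁰ − max(−M,0) e_i`,
one has `E_X(λ'¹, λ'⁰) = E_X(λ¹, λ⁰)`. -/

lemma inf'_sub_const {α : Type*} (s : Finset α) (hs : s.Nonempty) (g : α → ℝ) (c : ℝ) :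
    s.inf' hs (fun x => g x - c) = s.inf' hs g - c := by
  apply le_antisymm
  · obtain ⟨x, hx, hgx⟩ := s.exists_mem_eq_inf' hs g
    calc s.inf' hs (fun x => g x - c) ≤ g x - c := s.inf'_le _ hx
    _ = s.inf' hs g - c := by rw [hgx]
  · obtain ⟨y, hy, hgy⟩ := s.exists_mem_eq_inf' hs (fun x => g x - c)
    rw [hgy]
    have := s.inf'_le g hy
    linarith

lemma inf'_split {n : ℕ} (X : Finset (Fin n → ℝ)) (hX : X.Nonempty)
    (hbin : ∀ x ∈ X, ∀ k, x k = 0 ∨ x k = 1) (i : Fin n)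
    (h0 : (X.filter fun x => x i = 0).Nonempty)
    (h1 : (X.filter fun x => x i = 1).Nonempty)
    (g : (Fin n → ℝ) → ℝ) :
    X.inf' hX g = min ((X.filter fun x => x i = 0).inf' h0 g)
      ((X.filter fun x => x i = 1).inf' h1 g) := by
  apply le_antisymm
  · apply le_min
    · obtain ⟨x, hx, hgx⟩ := Finset.exists_mem_eq_inf' h0 g
      rw [hgx]; exact X.inf'_le g (mem_filter.mp hx).1
    · obtain ⟨x, hx, hgx⟩ := Finset.exists_mem_eq_inf' h1 g
      rw [hgx]; exact X.inf'_le g (mem_filter.mp hx).1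
  · apply Finset.le_inf'
    intro x hx
    rcases hbin x hx i with h | h
    · exact le_trans (min_le_left _ _) (Finset.inf'_le g (mem_filter.mpr ⟨hx, h⟩))
    · exact le_trans (min_le_right _ _) (Finset.inf'_le g (mem_filter.mpr ⟨hx, h⟩))

set_option maxHeartbeats 1000000 in
theorem lifted_damped_subtraction_preserves_energy
    (n : ℕ) (X : Finset (Fin n → ℝ)) (hX : X.Nonempty)
    (hbin : ∀ x ∈ X, ∀ k, x k = 0 ∨ x k = 1)
    (lam1 lam0 : Fin n → ℝ) (i : Fin n)
    (h0 : (X.filter fun x => x i = 0).Nonempty)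
    (h1 : (X.filter fun x => x i = 1).Nonempty)
    (ω : ℝ) (hω0 : 0 ≤ ω) (hω1 : ω ≤ 1) :
    liftedEnergy X hX
        (lam1 - (max (ω * (liftedMinMarginal X i 1 h1 lam1 lam0
            - liftedMinMarginal X i 0 h0 lam1 lam0)) 0) • (Pi.single i 1 : Fin n → ℝ))
        (lam0 - (max (-(ω * (liftedMinMarginal X i 1 h1 lam1 lam0
            - liftedMinMarginal X i 0 h0 lam1 lam0))) 0) • (Pi.single i 1 : Fin n → ℝ))
      = liftedEnergy X hX lam1 lam0 := by
  set m1 := liftedMinMarginal X i 1 h1 lam1 lam0 with hm1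
  set m0 := liftedMinMarginal X i 0 h0 lam1 lam0 with hm0
  set M := ω * (m1 - m0) with hM
  set a := max M 0 with ha
  set b := max (-M) 0 with hb
  set f : (Fin n → ℝ) → ℝ := fun x => ∑ k, (lam1 k * x k + lam0 k * (1 - x k)) with hf
  have key : ∀ x : Fin n → ℝ,
      (∑ k, ((lam1 - a • (Pi.single i 1 : Fin n → ℝ)) k * x k
        + (lam0 - b • (Pi.single i 1 : Fin n → ℝ)) k * (1 - x k)))
      = f x - a * x i - b * (1 - x i) := by
    intro x
    have : ∀ k, ((lam1 - a • (Pi.single i 1 : Fin n → ℝ)) k * x k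
        + (lam0 - b • (Pi.single i 1 : Fin n → ℝ)) k * (1 - x k))
        = (lam1 k * x k + lam0 k * (1 - x k))
          - (if k = i then a * x i + b * (1 - x i) else 0) := by
      intro k
      by_cases hk : k = i
      · subst hk
        simp [Pi.single_apply]
        ring
      · simp [Pi.single_apply, hk]
    rw [Finset.sum_congr rfl (fun k _ => this k), Finset.sum_sub_distrib,
      Finset.sum_ite_eq' Finset.univ i, if_pos (Finset.mem_univ i)]
    ring
  have hE : liftedEnergy X hX
        (lam1 - a • (Pi.single i 1 : Fin n → ℝ))
        (lam0 - b • (Pi.single i 1 : Fin n → ℝ))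
      = X.inf' hX (fun x => f x - a * x i - b * (1 - x i)) := by
    unfold liftedEnergy
    exact Finset.inf'_congr hX rfl (fun x _ => key x)
  have hErhs : liftedEnergy X hX lam1 lam0 = X.inf' hX f := rfl
  rw [hE, hErhs, inf'_split X hX hbin i h0 h1, inf'_split X hX hbin i h0 h1 f]
  have e0 : (X.filter fun x => x i = 0).inf' h0 (fun x => f x - a * x i - b * (1 - x i))
      = m0 - b := by
    have : (X.filter fun x => x i = 0).inf' h0 (fun x => f x - a * x i - b * (1 - x i))
        = (X.filter fun x => x i = 0).inf' h0 (fun x => f x - b) := by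
      apply Finset.inf'_congr h0 rfl
      intro x hx
      have := (mem_filter.mp hx).2
      simp only [this]; ring
    rw [this, inf'_sub_const]
    rfl
  have e1 : (X.filter fun x => x i = 1).inf' h1 (fun x => f x - a * x i - b * (1 - x i))
      = m1 - a := by
    have : (X.filter fun x => x i = 1).inf' h1 (fun x => f x - a * x i - b * (1 - x i))
        = (X.filter fun x => x i = 1).inf' h1 (fun x => f x - a) := by
      apply Finset.inf'_congr h1 rfl
      intro x hx
      have := (mem_filter.mp hx).2
      simp only [this]; ring
    rw [this, inf'_sub_const]
    rfl
  rw [e0, e1]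
  have hm0' : (X.filter fun x => x i = 0).inf' h0 f = m0 := rfl
  have hm1' : (X.filter fun x => x i = 1).inf' h1 f = m1 := rfl
  rw [hm0', hm1']
  clear hE hErhs e0 e1 hm0' hm1' key hf
  clear_value f
  clear f
  clear_value b a M m0 m1
  rcases le_total M 0 with hMle | hMge
  · have haz : a = 0 := ha.trans (max_eq_right hMle)
    have hbz : b = -M := hb.trans (max_eq_left (by linarith))
    rcases le_total m0 m1 with hle | hle
    · have hM0 : M = 0 := le_antisymm hMle (by rw [hM]; exact mul_nonneg hω0 (by linarith))
      rw [haz, hbz, hM0]; simp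
    · have hMb : m1 - m0 ≤ M := by rw [hM]; nlinarith
      rw [haz, hbz]
      rw [min_eq_right (by linarith : m1 - 0 ≤ m0 - -M), min_eq_right hle]
      ring
  · have haz : a = M := ha.trans (max_eq_left hMge)
    have hbz : b = 0 := hb.trans (max_eq_right (by linarith))
    rcases le_total m0 m1 with hle | hle
    · have hMb : M ≤ m1 - m0 := by rw [hM]; nlinarith
      rw [haz, hbz]
      rw [min_eq_left (by linarith : m0 - 0 ≤ m1 - M), min_eq_left hle]
      ring
    · have hM0 : M = 0 := le_antisymm (by rw [hM]; nlinarith) hMge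
      rw [haz, hbz, hM0]; simp
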